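/- Let A be a finite alphabet. If Z and Z' are strong alt-induced codes over A that are both p-subinfix codes, then the product ZZ' is a strong alt-induced code that is a p-subinfix code. -/

import Mathlib

/-- `X` is a code: every word has at most one factorization into words of `X`. -/
def IsCode {A : Type} (X : Language A) : Prop :=
  ∀ l m : List (List A), (∀ u ∈ l, u ∈ X) → (∀ u ∈ m, u ∈ X) →
    l.flatten = m.flatten → l = m

/-- `l` is an alternative factorization of `w` on `(X, Y)`. -/
def IsAltFact {A : Type} (X Y : Language A) (l : List (List A)) (w : List A) : Prop :=
  2 ≤ l.length ∧ l.flatten = w ∧ (∀ u ∈ l, u ∈ X ∨ u ∈ Y) ∧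
    l.Chain' (fun u v => (u ∈ X → v ∈ Y) ∧ (u ∈ Y → v ∈ X))

/-- Two alternative factorizations are similar: they both begin with words in the same
set (`X` or `Y`), and likewise both end with words in the same set. -/
def SimilarFacts {A : Type} (X Y : Language A) (l l' : List (List A)) : Prop :=
  ((l.headI ∈ X ∧ l'.headI ∈ X) ∨ (l.headI ∈ Y ∧ l'.headI ∈ Y)) ∧
  ((l.getLastI ∈ X ∧ l'.getLastI ∈ X) ∨ (l.getLastI ∈ Y ∧ l'.getLastI ∈ Y))

/-- `(X, Y)` is an alternative code: `X`, `Y` are nonempty subsets of `A⁺` and no word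
of `A⁺` admits two different similar alternative factorizations on `(X, Y)`. -/
def IsAltCode {A : Type} (X Y : Language A) : Prop :=
  X.Nonempty ∧ Y.Nonempty ∧ [] ∉ X ∧ [] ∉ Y ∧
  ∀ w : List A, w ≠ [] → ∀ l l' : List (List A),
    IsAltFact X Y l w → IsAltFact X Y l' w → SimilarFacts X Y l l' → l = l'

/-- `(X, Y)` is a strong alternative code: an alternative code with
`X⁻¹(XY) ⊆ Y` and `(XY)Y⁻¹ ⊆ X`. -/
def IsStrongAltCode {A : Type} (X Y : Language A) : Prop :=
  IsAltCode X Y ∧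
  {u : List A | ∃ x ∈ X, x ++ u ∈ X * Y} ⊆ Y ∧
  {u : List A | ∃ y ∈ Y, u ++ y ∈ X * Y} ⊆ X

/-- `Z` is a strong alt-induced code: `Z = XY` for some strong alternative code `(X, Y)`. -/
def IsStrongAltInduced {A : Type} (Z : Language A) : Prop :=
  ∃ X Y : Language A, IsStrongAltCode X Y ∧ Z = X * Y

/-- Prefix code: no word is a proper prefix of another word of `X`. -/
def IsPrefixCode {A : Type} (X : Language A) : Prop :=
  ∀ u ∈ X, ∀ v ∈ X, u <+: v → u = v

/-- Suffix code: no word is a proper suffix of another word of `X`. -/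
def IsSuffixCode {A : Type} (X : Language A) : Prop :=
  ∀ u ∈ X, ∀ v ∈ X, u <:+ v → u = v

/-- Bifix code: both a prefix code and a suffix code. -/
def IsBifixCode {A : Type} (X : Language A) : Prop :=
  IsPrefixCode X ∧ IsSuffixCode X

/-- p-infix code: no word in `X` is an infix of a proper prefix of another word in `X`. -/
def IsPInfixCode {A : Type} (X : Language A) : Prop :=
  ∀ u ∈ X, ∀ v ∈ X, u ≠ v → ∀ p : List A, p <+: v → p ≠ v → ¬ u <:+: p

/-- s-infix code: no word in `X` is an infix of a proper suffix of another word in `X`. -/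
def IsSInfixCode {A : Type} (X : Language A) : Prop :=
  ∀ u ∈ X, ∀ v ∈ X, u ≠ v → ∀ p : List A, p <:+ v → p ≠ v → ¬ u <:+: p

/-- Infix code: no word in `X` is an infix of a proper infix of another word in `X`. -/
def IsInfixCode {A : Type} (X : Language A) : Prop :=
  ∀ u ∈ X, ∀ v ∈ X, u ≠ v → ∀ p : List A, p <:+: v → p ≠ v → ¬ u <:+: p

/-- p-subinfix code: no word in `X` is a subword of a proper prefix of another word in `X`. -/
def IsPSubinfixCode {A : Type} (X : Language A) : Prop :=
  ∀ u ∈ X, ∀ v ∈ X, u ≠ v → ∀ p : List A, p <+: v → p ≠ v → ¬ List.Sublist u p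

/-- s-subinfix code: no word in `X` is a subword of a proper suffix of another word in `X`. -/
def IsSSubinfixCode {A : Type} (X : Language A) : Prop :=
  ∀ u ∈ X, ∀ v ∈ X, u ≠ v → ∀ p : List A, p <:+ v → p ≠ v → ¬ List.Sublist u p

/-- Subinfix code: no word in `X` is a subword of a proper infix of another word in `X`. -/
def IsSubinfixCode {A : Type} (X : Language A) : Prop :=
  ∀ u ∈ X, ∀ v ∈ X, u ≠ v → ∀ p : List A, p <:+: v → p ≠ v → ¬ List.Sublist u p

/-- Hypercode: no word in `X` is a proper subword of another word in `X`. -/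
def IsHypercode {A : Type} (X : Language A) : Prop :=
  ∀ u ∈ X, ∀ v ∈ X, List.Sublist u v → u = v

/-- Maximal prefix code: a prefix code not properly contained in any prefix code over `A`
(i.e. any nonempty subset of `A⁺` that is a prefix code). -/
def IsMaxPrefixCode {A : Type} (X : Language A) : Prop :=
  IsPrefixCode X ∧ ∀ X' : Language A, [] ∉ X' → IsPrefixCode X' → X ≤ X' → X' ≤ X

/-- Maximal suffix code. -/
def IsMaxSuffixCode {A : Type} (X : Language A) : Prop :=
  IsSuffixCode X ∧ ∀ X' : Language A, [] ∉ X' → IsSuffixCode X' → X ≤ X' → X' ≤ X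

/-- Maximal bifix code. -/
def IsMaxBifixCode {A : Type} (X : Language A) : Prop :=
  IsBifixCode X ∧ ∀ X' : Language A, [] ∉ X' → IsBifixCode X' → X ≤ X' → X' ≤ X

/-- `X` is thin: some word is not an infix of any word of `X`. -/
def IsThin {A : Type} (X : Language A) : Prop :=
  ∃ w : List A, ∀ x ∈ X, ¬ w <:+: x


/-! ### Auxiliary material for Statement 9 -/

section StrongAltAux

variable {A : Type}

private def pw (t : List A) : ℕ → List A
  | 0 => []
  | n + 1 => t ++ pw t n

private lemma pw_zero (t : List A) : pw t 0 = [] := rfl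

private lemma pw_succ (t : List A) (n : ℕ) : pw t (n + 1) = t ++ pw t n := rfl

private lemma pw_add (t : List A) (m n : ℕ) : pw t (m + n) = pw t m ++ pw t n := by
  induction m with
  | zero => simp [pw_zero]
  | succ m ih =>
      have h : m + 1 + n = (m + n) + 1 := by omega
      rw [h, pw_succ, ih, pw_succ, List.append_assoc]

private lemma pw_length (t : List A) (n : ℕ) : (pw t n).length = n * t.length := by
  induction n with
  | zero => simp [pw_zero]
  | succ n ih => rw [pw_succ, List.length_append, ih]; ring

private lemma psub_prefixCode {X : Language A} (h : IsPSubinfixCode X) : IsPrefixCode X := by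
  intro u hu v hv huv
  by_contra hne
  exact h u hu v hv hne u huv hne (List.Sublist.refl u)

private lemma prefixCode_mul {X Y : Language A} (hX : IsPrefixCode X) (hY : IsPrefixCode Y) :
    IsPrefixCode (X * Y) := by
  intro u hu v hv huv
  obtain ⟨a, ha, b, hb, rfl⟩ := Language.mem_mul.1 hu
  obtain ⟨c, hc, d, hd, rfl⟩ := Language.mem_mul.1 hv
  have hac : a = c := by
    rcases List.prefix_or_prefix_of_prefix
        ((List.prefix_append a b).trans huv) (List.prefix_append c d) with h | h
    · exact hX a ha c hc h
    · exact (hX c hc a ha h).symm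
  subst hac
  obtain ⟨s, hs⟩ := huv
  rw [List.append_assoc] at hs
  have hbd : b = d := hY b hb d hd ⟨s, List.append_cancel_left hs⟩
  rw [hbd]

private lemma nil_not_mem_mul {X Y : Language A} (hX : [] ∉ X) : [] ∉ X * Y := by
  intro h
  obtain ⟨a, ha, b, hb, hab⟩ := Language.mem_mul.1 h
  exact hX ((List.append_eq_nil_iff.1 hab).1 ▸ ha)

/-- Uniqueness of alternating factorizations over a pair of prefix codes,
given agreement of the "set" of the first word. -/
private lemma chainFact_unique {P Q : Language A} (hP : IsPrefixCode P) (hQ : IsPrefixCode Q)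
    (hPe : [] ∉ P) (hQe : [] ∉ Q) :
    ∀ (n : ℕ) (l l' : List (List A)), l.length ≤ n → l ≠ [] → l' ≠ [] →
      (∀ u ∈ l, u ∈ P ∨ u ∈ Q) → (∀ u ∈ l', u ∈ P ∨ u ∈ Q) →
      l.Chain' (fun u v => (u ∈ P → v ∈ Q) ∧ (u ∈ Q → v ∈ P)) →
      l'.Chain' (fun u v => (u ∈ P → v ∈ Q) ∧ (u ∈ Q → v ∈ P)) →
      l.flatten = l'.flatten →
      ((l.headI ∈ P ∧ l'.headI ∈ P) ∨ (l.headI ∈ Q ∧ l'.headI ∈ Q)) →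
      l = l' := by
  intro n
  induction n with
  | zero =>
      intro l l' hlen hl _ _ _ _ _ _ _
      cases l with
      | nil => exact absurd rfl hl
      | cons a tl => simp at hlen
  | succ n ih =>
      intro l l' hlen hl hl' hm hm' hc hc' hfl hhead
      cases l with
      | nil => exact absurd rfl hl
      | cons u tl =>
        cases l' with
        | nil => exact absurd rfl hl'
        | cons v tl' =>
          have hufl : u <+: (v :: tl').flatten := by
            rw [← hfl]; exact ⟨tl.flatten, by simp⟩
          have hvfl : v <+: (v :: tl').flatten := ⟨tl'.flatten, by simp⟩
          have huv : u = v := by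
            rcases hhead with ⟨h1, h2⟩ | ⟨h1, h2⟩
            · rcases List.prefix_or_prefix_of_prefix hufl hvfl with h | h
              · exact hP u h1 v h2 h
              · exact (hP v h2 u h1 h).symm
            · rcases List.prefix_or_prefix_of_prefix hufl hvfl with h | h
              · exact hQ u h1 v h2 h
              · exact (hQ v h2 u h1 h).symm
          subst huv
          have hfl2 : tl.flatten = tl'.flatten := by
            simp only [List.flatten_cons] at hfl
            exact List.append_cancel_left hfl
          cases tl with
          | nil =>
            cases tl' with
            | nil => rfl
            | cons w r =>
              exfalso
              have hw0 : w ++ r.flatten = [] := by simpa using hfl2.symm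
              have hw : w = [] := (List.append_eq_nil_iff.1 hw0).1
              rcases hm' w (by simp) with h | h
              · exact hPe (hw ▸ h)
              · exact hQe (hw ▸ h)
          | cons a r =>
            cases tl' with
            | nil =>
              exfalso
              have hw0 : a ++ r.flatten = [] := by simpa using hfl2
              have hw : a = [] := (List.append_eq_nil_iff.1 hw0).1
              rcases hm a (by simp) with h | h
              · exact hPe (hw ▸ h)
              · exact hQe (hw ▸ h)
            | cons b r' =>
              have hca := (List.isChain_cons_cons.1 hc).1
              have hcb := (List.isChain_cons_cons.1 hc').1
              have hhead2 : ((a :: r).headI ∈ P ∧ (b :: r').headI ∈ P) ∨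
                  ((a :: r).headI ∈ Q ∧ (b :: r').headI ∈ Q) := by
                simp only [List.headI]
                rcases hhead with ⟨h1, h2⟩ | ⟨h1, h2⟩
                · exact Or.inr ⟨hca.1 h1, hcb.1 h2⟩
                · exact Or.inl ⟨hca.2 h1, hcb.2 h2⟩
              have htl := ih (a :: r) (b :: r')
                (by simpa using Nat.le_of_succ_le_succ hlen) (by simp) (by simp)
                (fun x hx => hm x (List.mem_cons_of_mem _ hx))
                (fun x hx => hm' x (List.mem_cons_of_mem _ hx))
                (List.isChain_cons_cons.1 hc).2 (List.isChain_cons_cons.1 hc').2 hfl2 hhead2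
              rw [htl]

/-- The key combinatorial contradiction. -/
private lemma coreContra {X Y : Language A}
    (halt : ∀ w : List A, w ≠ [] → ∀ l l' : List (List A),
      IsAltFact X Y l w → IsAltFact X Y l' w → SimilarFacts X Y l l' → l = l')
    (hpref : IsPrefixCode (X * Y)) (hXe : [] ∉ X)
    (x₀ y t : List A) (ht : t ≠ [])
    (hx : ∀ i, x₀ ++ pw t i ∈ X) (hy : ∀ k, pw t k ++ y ∈ Y) : False := by
  have htl : 0 < t.length := List.length_pos_iff.2 ht
  have hx0' : x₀ ∈ X := by simpa [pw_zero] using hx 0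
  have hx0 : x₀ ≠ [] := fun h => hXe (h ▸ hx0')
  have hinj : ∀ i j : ℕ, x₀ ++ pw t i = x₀ ++ pw t j → i = j := by
    intro i j h
    have hlen := congrArg List.length h
    simp only [List.length_append, pw_length] at hlen
    have h2 := Nat.add_left_cancel hlen
    exact Nat.eq_of_mul_eq_mul_right htl h2
  have claimA : ∀ i j : ℕ, i ≠ j → x₀ ++ pw t i ∈ Y → x₀ ++ pw t j ∈ Y → False := by
    have base : ∀ i j : ℕ, i < j → x₀ ++ pw t i ∈ Y → x₀ ++ pw t j ∈ Y → False := by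
      intro i j hij hi hj
      obtain ⟨d, rfl⟩ : ∃ d, j = i + (d + 1) := ⟨j - i - 1, by omega⟩
      have hu : (x₀ ++ pw t i) ++ (x₀ ++ pw t i) ∈ X * Y := Language.append_mem_mul (hx i) hi
      have hv : (x₀ ++ pw t i) ++ (x₀ ++ pw t (i + (d + 1))) ∈ X * Y :=
        Language.append_mem_mul (hx i) hj
      have heq : (x₀ ++ pw t i) ++ (x₀ ++ pw t (i + (d + 1)))
          = ((x₀ ++ pw t i) ++ (x₀ ++ pw t i)) ++ pw t (d + 1) := by
        rw [pw_add]; simp [List.append_assoc]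
      have hEq := hpref _ hu _ hv ⟨pw t (d + 1), heq.symm⟩
      have hup : x₀ ++ pw t i ++ (x₀ ++ pw t i) ++ pw t (d + 1)
          = x₀ ++ pw t i ++ (x₀ ++ pw t i) ++ [] := by
        rw [List.append_nil, ← heq]
        exact hEq.symm
      have hnil : pw t (d + 1) = [] := List.append_cancel_left hup
      have hlen := congrArg List.length hnil
      rw [pw_length] at hlen
      simp only [List.length_nil] at hlen
      rcases Nat.mul_eq_zero.1 hlen with h | h <;> omega
    intro i j hne hi hj
    rcases lt_or_gt_of_ne hne with h | h
    · exact base i j h hi hj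
    · exact base j i h hj hi
  have hwne : ∀ m : ℕ, x₀ ++ (pw t m ++ y) ≠ [] := by
    intro m h
    exact hx0 (List.append_eq_nil_iff.1 h).1
  have mkfact : ∀ i k : ℕ, (x₀ ++ pw t i ∈ Y → pw t k ++ y ∈ X) →
      IsAltFact X Y [x₀ ++ pw t i, pw t k ++ y] (x₀ ++ (pw t (i + k) ++ y)) := by
    intro i k hcond
    refine ⟨by simp, ?_, ?_, ?_⟩
    · simp [pw_add, List.append_assoc]
    · intro w hw
      simp only [List.mem_cons, List.not_mem_nil, or_false] at hw
      rcases hw with rfl | rfl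
      · exact Or.inl (hx i)
      · exact Or.inr (hy k)
    · exact List.isChain_cons_cons.2 ⟨⟨fun _ => hy k, hcond⟩, List.isChain_singleton _⟩
  have mksim : ∀ i k i' k' : ℕ, SimilarFacts X Y
      [x₀ ++ pw t i, pw t k ++ y] [x₀ ++ pw t i', pw t k' ++ y] := by
    intro i k i' k'
    exact ⟨Or.inl ⟨hx i, hx i'⟩, Or.inr ⟨hy k, hy k'⟩⟩
  have main : ∀ i k i' k' : ℕ, i + k = i' + k' → i ≠ i' →
      (x₀ ++ pw t i ∈ Y → pw t k ++ y ∈ X) →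
      (x₀ ++ pw t i' ∈ Y → pw t k' ++ y ∈ X) → False := by
    intro i k i' k' hsum hne hcd hcd'
    have f1 := mkfact i k hcd
    have f2 := mkfact i' k' hcd'
    rw [hsum] at f1
    have hEq := halt _ (hwne (i' + k')) _ _ f1 f2 (mksim i k i' k')
    have hh : x₀ ++ pw t i = x₀ ++ pw t i' := by injection hEq
    exact hne (hinj _ _ hh)
  have claimB : ∀ k k' : ℕ, k ≠ k' → pw t k ++ y ∈ X → pw t k' ++ y ∈ X → False := by
    intro k k' hne hk hk'
    exact main k' k k k' (by omega) (Ne.symm hne) (fun _ => hk) (fun _ => hk')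
  have h2of3 : ∃ i j : ℕ, i < j ∧ x₀ ++ pw t i ∉ Y ∧ x₀ ++ pw t j ∉ Y := by
    by_cases h0 : x₀ ++ pw t 0 ∈ Y
    · exact ⟨1, 2, by omega, fun h => claimA 0 1 (by omega) h0 h,
        fun h => claimA 0 2 (by omega) h0 h⟩
    · by_cases hone : x₀ ++ pw t 1 ∈ Y
      · exact ⟨0, 2, by omega, h0, fun h => claimA 1 2 (by omega) hone h⟩
      · exact ⟨0, 1, by omega, h0, hone⟩
  obtain ⟨i, j, hij, hiY, hjY⟩ := h2of3
  obtain ⟨d, rfl⟩ : ∃ d, j = i + (d + 1) := ⟨j - i - 1, by omega⟩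
  have hkp : ∃ k', pw t k' ++ y ∉ X ∧ pw t (k' + (d + 1)) ++ y ∉ X := by
    by_cases h0 : pw t 0 ++ y ∈ X
    · by_cases h1 : pw t (d + 2) ++ y ∈ X
      · exact absurd h1 (fun h => claimB 0 (d + 2) (by omega) h0 h)
      · by_cases h2 : pw t (d + 2 + (d + 1)) ++ y ∈ X
        · exact absurd h2 (fun h => claimB 0 (d + 2 + (d + 1)) (by omega) h0 h)
        · exact ⟨d + 2, h1, h2⟩
    · by_cases h1 : pw t (d + 1) ++ y ∈ X
      · by_cases h2 : pw t (d + 2) ++ y ∈ X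
        · exact absurd h2 (fun h => claimB (d + 1) (d + 2) (by omega) h1 h)
        · by_cases h3 : pw t (d + 2 + (d + 1)) ++ y ∈ X
          · exact absurd h3 (fun h => claimB (d + 1) (d + 2 + (d + 1)) (by omega) h1 h)
          · exact ⟨d + 2, h2, h3⟩
      · exact ⟨0, h0, by rw [Nat.zero_add]; exact h1⟩
  obtain ⟨k', hk1, hk2⟩ := hkp
  exact main i (k' + (d + 1)) (i + (d + 1)) k' (by omega) (by omega)
    (fun h => absurd h hiY) (fun h => absurd h hjY)

private lemma strong_prefixCode {X Y : Language A} (hS : IsStrongAltCode X Y)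
    (hpref : IsPrefixCode (X * Y)) : IsPrefixCode X := by
  obtain ⟨⟨hXne, hYne, hXe, hYe, halt⟩, hc1, hc2⟩ := hS
  intro u hu v hv huv
  by_contra hne
  obtain ⟨t, rfl⟩ := huv
  have ht : t ≠ [] := by rintro rfl; exact hne (by simp)
  obtain ⟨y, hy0⟩ := hYne
  have hty : ∀ k, pw t k ++ y ∈ Y := by
    intro k
    induction k with
    | zero => simp only [pw_zero, List.nil_append]; exact hy0
    | succ k ih =>
        refine hc1 ⟨u, hu, ?_⟩
        have he : u ++ (pw t (k + 1) ++ y) = (u ++ t) ++ (pw t k ++ y) := by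
          rw [pw_succ]; simp [List.append_assoc]
        rw [he]
        exact Language.append_mem_mul hv ih
  have htx : ∀ i, u ++ pw t i ∈ X := by
    intro i
    induction i with
    | zero => simpa [pw_zero] using hu
    | succ i ih =>
        refine hc2 ⟨y, hy0, ?_⟩
        have he : (u ++ pw t (i + 1)) ++ y = (u ++ pw t i) ++ (pw t 1 ++ y) := by
          rw [show pw t (i + 1) = pw t i ++ pw t 1 from pw_add t i 1]
          simp [List.append_assoc]
        rw [he]
        exact Language.append_mem_mul ih (hty 1)
  exact coreContra halt hpref hXe u y t ht htx hty

private lemma strong_suffixCode {X Y : Language A} (hS : IsStrongAltCode X Y)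
    (hpref : IsPrefixCode (X * Y)) : IsSuffixCode Y := by
  obtain ⟨⟨hXne, hYne, hXe, hYe, halt⟩, hc1, hc2⟩ := hS
  intro u hu v hv huv
  by_contra hne
  obtain ⟨t, rfl⟩ := huv
  have ht : t ≠ [] := by rintro rfl; exact hne (by simp)
  obtain ⟨x₀, hx0⟩ := hXne
  have hstep : ∀ x ∈ X, x ++ t ∈ X := by
    intro x hxx
    refine hc2 ⟨u, hu, ?_⟩
    rw [List.append_assoc]
    exact Language.append_mem_mul hxx hv
  have htx : ∀ i, x₀ ++ pw t i ∈ X := by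
    intro i
    induction i with
    | zero => simp only [pw_zero, List.append_nil]; exact hx0
    | succ i ih =>
        have he : x₀ ++ pw t (i + 1) = (x₀ ++ pw t i) ++ t := by
          rw [show pw t (i + 1) = pw t i ++ pw t 1 from pw_add t i 1]
          simp [pw_succ, pw_zero, List.append_assoc]
        rw [he]
        exact hstep _ ih
  have hty : ∀ k, pw t k ++ u ∈ Y := by
    intro k
    induction k with
    | zero => simpa [pw_zero] using hu
    | succ k ih =>
        refine hc1 ⟨x₀, hx0, ?_⟩
        have he : x₀ ++ (pw t (k + 1) ++ u) = (x₀ ++ t) ++ (pw t k ++ u) := by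
          rw [pw_succ]; simp [List.append_assoc]
        rw [he]
        exact Language.append_mem_mul (hstep x₀ hx0) ih
  exact coreContra halt hpref hXe x₀ u t ht htx hty

private lemma strong_Y_prefixCode {X Y : Language A} (hXne : X.Nonempty)
    (hpref : IsPrefixCode (X * Y)) : IsPrefixCode Y := by
  intro u hu v hv huv
  obtain ⟨x, hxx⟩ := hXne
  obtain ⟨s, rfl⟩ := huv
  have h := hpref (x ++ u) (Language.append_mem_mul hxx hu) (x ++ (u ++ s))
      (Language.append_mem_mul hxx hv) ⟨s, by simp [List.append_assoc]⟩
  exact List.append_cancel_left h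

end StrongAltAux

/-- the product of two p-subinfix strong alt-induced codes is a
p-subinfix strong alt-induced code. -/
theorem strongAltInduced_mul_pSubinfixCode {A : Type} [Fintype A] (Z Z' : Language A)
    (hZ : IsStrongAltInduced Z) (hZ' : IsStrongAltInduced Z')
    (h1 : IsPSubinfixCode Z) (h2 : IsPSubinfixCode Z') :
    IsStrongAltInduced (Z * Z') ∧ IsPSubinfixCode (Z * Z') := by
  constructor
  · -- strong alt-induced
    obtain ⟨X, Y, hS, rfl⟩ := hZ
    obtain ⟨X', Y', hS', rfl⟩ := hZ'
    have hZpref : IsPrefixCode (X * Y) := psub_prefixCode h1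
    have hZ'pref : IsPrefixCode (X' * Y') := psub_prefixCode h2
    have hXne : X.Nonempty := hS.1.1
    have hYne : Y.Nonempty := hS.1.2.1
    have hXe : [] ∉ X := hS.1.2.2.1
    have hX'ne : X'.Nonempty := hS'.1.1
    have hY'ne : Y'.Nonempty := hS'.1.2.1
    have hX'e : [] ∉ X' := hS'.1.2.2.1
    have hY'e : [] ∉ Y' := hS'.1.2.2.2.1
    have hc1' := hS'.2.1
    have hc2' := hS'.2.2
    have hX'pref : IsPrefixCode X' := strong_prefixCode hS' hZ'pref
    have hY'suf : IsSuffixCode Y' := strong_suffixCode hS' hZ'pref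
    have hY'pref : IsPrefixCode Y' := strong_Y_prefixCode hX'ne hZ'pref
    have hZe : [] ∉ X * Y := nil_not_mem_mul hXe
    have hPpref : IsPrefixCode ((X * Y) * X') := prefixCode_mul hZpref hX'pref
    have hPe : [] ∉ (X * Y) * X' := nil_not_mem_mul hZe
    obtain ⟨x₀, hx₀⟩ := hXne
    obtain ⟨y₀, hy₀⟩ := hYne
    obtain ⟨x₀', hx₀'⟩ := hX'ne
    have hPne : ((X * Y) * X').Nonempty :=
      ⟨(x₀ ++ y₀) ++ x₀',
        Language.append_mem_mul (Language.append_mem_mul hx₀ hy₀) hx₀'⟩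
    refine ⟨(X * Y) * X', Y', ⟨⟨hPne, hY'ne, hPe, hY'e, ?_⟩, ?_, ?_⟩,
      (mul_assoc (X * Y) X' Y').symm⟩
    · -- alternative code
      intro w hw l l' hf hf' hsim
      have hl : l ≠ [] := List.ne_nil_of_length_pos (lt_of_lt_of_le (by norm_num) hf.1)
      have hl' : l' ≠ [] := List.ne_nil_of_length_pos (lt_of_lt_of_le (by norm_num) hf'.1)
      exact chainFact_unique hPpref hY'pref hPe hY'e l.length l l' le_rfl hl hl'
        hf.2.2.1 hf'.2.2.1 hf.2.2.2 hf'.2.2.2 (hf.2.1.trans hf'.2.1.symm) hsim.1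
    · -- X₀⁻¹(X₀Y₀) ⊆ Y₀
      rintro u ⟨p, hp, hpu⟩
      obtain ⟨z, hz, x', hx', rfl⟩ := Language.mem_mul.1 hp
      obtain ⟨q, hq, y₂', hy₂', heq⟩ := Language.mem_mul.1 hpu
      obtain ⟨w, hw, x₂', hx₂', rfl⟩ := Language.mem_mul.1 hq
      -- heq : (w ++ x₂') ++ y₂' = (z ++ x') ++ u
      have hzw : w = z := by
        rcases List.prefix_or_prefix_of_prefix
            (⟨x₂' ++ y₂', by rw [← heq]; simp [List.append_assoc]⟩ : w <+: (z ++ x') ++ u)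
            (⟨x' ++ u, by simp [List.append_assoc]⟩ : z <+: (z ++ x') ++ u) with h | h
        · exact hZpref w hw z hz h
        · exact (hZpref z hz w hw h).symm
      subst hzw
      have hx'u : x₂' ++ y₂' = x' ++ u := by
        have hh : w ++ (x₂' ++ y₂') = w ++ (x' ++ u) := by
          rw [← List.append_assoc, ← List.append_assoc]; exact heq
        exact List.append_cancel_left hh
      exact hc1' ⟨x', hx', Language.mem_mul.2 ⟨x₂', hx₂', y₂', hy₂', hx'u⟩⟩
    · -- (X₀Y₀)Y₀⁻¹ ⊆ X₀
      rintro u ⟨y', hy', huy⟩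
      obtain ⟨q, hq, y₂', hy₂', heq⟩ := Language.mem_mul.1 huy
      -- heq : q ++ y₂' = u ++ y'
      have hyy : y₂' = y' := by
        rcases List.suffix_or_suffix_of_suffix
            (⟨q, heq⟩ : y₂' <:+ u ++ y') (⟨u, rfl⟩ : y' <:+ u ++ y') with h | h
        · exact hY'suf y₂' hy₂' y' hy' h
        · exact (hY'suf y' hy' y₂' hy₂' h).symm
      subst hyy
      have : q = u := List.append_cancel_right heq
      exact this ▸ hq
  · -- p-subinfix
    intro u hu v hv hne p hp hpne hsub
    obtain ⟨a, ha, b, hb, rfl⟩ := Language.mem_mul.1 hu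
    obtain ⟨c, hc, d, hd, rfl⟩ := Language.mem_mul.1 hv
    obtain ⟨p₁, p₂, rfl, ha1, hb2⟩ := List.append_sublist_iff.1 hsub
    rcases List.prefix_or_prefix_of_prefix ((List.prefix_append p₁ p₂).trans hp)
        (List.prefix_append c d) with hcase | hcase
    · by_cases hpc : p₁ = c
      · subst hpc
        obtain ⟨s, hs⟩ := hp
        rw [List.append_assoc] at hs
        have hpd : p₂ ++ s = d := List.append_cancel_left hs
        have hs0 : s ≠ [] := by
          rintro rfl
          apply hpne
          rw [← hpd]; simp
        have hslen : 0 < s.length := List.length_pos_iff.2 hs0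
        by_cases hbd : b = d
        · subst hbd
          have l1 := hb2.length_le
          have l2 := congrArg List.length hpd
          rw [List.length_append] at l2
          omega
        · refine h2 b hb d hd hbd p₂ ⟨s, hpd⟩ ?_ hb2
          intro hEq
          rw [hEq] at hpd
          have := congrArg List.length hpd
          rw [List.length_append] at this
          omega
      · by_cases hacx : a = c
        · subst hacx
          have l1 := ha1.length_le
          obtain ⟨s, hs⟩ := hcase
          have hs0 : s ≠ [] := by rintro rfl; exact hpc (by simpa using hs)
          have hslen : 0 < s.length := List.length_pos_iff.2 hs0
          have := congrArg List.length hs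
          rw [List.length_append] at this
          omega
        · exact h1 a ha c hc hacx p₁ hcase hpc ha1
    · obtain ⟨tt, rfl⟩ := hcase
      obtain ⟨s, hs⟩ := hp
      have hs' : c ++ (tt ++ (p₂ ++ s)) = c ++ d := by
        rw [← hs]; simp [List.append_assoc]
      have hd2 : tt ++ (p₂ ++ s) = d := List.append_cancel_left hs'
      have hs0 : s ≠ [] := by
        rintro rfl
        apply hpne
        simpa using hs
      have hslen : 0 < s.length := List.length_pos_iff.2 hs0
      have hpre : tt ++ p₂ <+: d := ⟨s, by rw [List.append_assoc]; exact hd2⟩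
      have hbsub : List.Sublist b (tt ++ p₂) :=
        hb2.trans (List.sublist_append_right tt p₂)
      by_cases hbd : b = d
      · subst hbd
        have l1 := hb2.length_le
        have l2 := congrArg List.length hd2
        simp only [List.length_append] at l2
        omega
      · refine h2 b hb d hd hbd (tt ++ p₂) hpre ?_ hbsub
        intro hEq
        have hlen := congrArg List.length (hd2.trans hEq.symm)
        simp only [List.length_append] at hlen
        omega
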